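/- arXiv:2602.10428 — 6 statements merged into one kernel-verified Lean document; each statement's English description precedes it below -/
import Mathlib

section
/- Suppose a : {0,...,N-1} × {0,...,N-1} → ℝ≥0 satisfies ex-post IR (a(k,i)=0 for k<i), monotonicity of total allocation probability P(i) := ∑_{k≥i} a(k,i) non-increasing in i, and the incentive constraints IC_{r,s} and IC_{s,t} for types r < s < t (where IC_{i,j} reads ∑_{k≥i}(x_k-θ_i)a(k,i) ≥ ∑_{k≥i}(x_k-θ_i)a(k,j)). Then the non-local upward constraint IC_{r,t} holds. -/
lemma restrict_sum (N i j : ℕ) (h : i ≤ j) (a : ℕ → ℕ → ℝ)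
    (hIR : ∀ k, k < j → a k j = 0) (f : ℕ → ℝ) :
    ∑ k ∈ Finset.Ico i N, f k * a k j = ∑ k ∈ Finset.Ico j N, f k * a k j := by
  refine (Finset.sum_subset (Finset.Ico_subset_Ico_left h) ?_).symm
  intro k hk hk'
  simp only [Finset.mem_Ico] at hk hk'
  have : k < j := by omega
  rw [hIR k this, mul_zero]

lemma shift_sum (N j : ℕ) (a : ℕ → ℕ → ℝ) (θ θ' : ℝ) :
    ∑ k ∈ Finset.Ico j N, ((k : ℝ) - θ) * a k j
      = ∑ k ∈ Finset.Ico j N, ((k : ℝ) - θ') * a k j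
        + (θ' - θ) * ∑ k ∈ Finset.Ico j N, a k j := by
  rw [Finset.mul_sum, ← Finset.sum_add_distrib]
  apply Finset.sum_congr rfl
  intro k _
  ring

/-- IC constraints compose transitively upward: for types `r < s < t`,
ex-post IR, allocation-probability monotonicity, `IC_{r,s}` and `IC_{s,t}`
imply the non-local upward constraint `IC_{r,t}`. -/
theorem stmt_2 (N r s t : ℕ) (hN : 2 ≤ N) (hrs : r < s) (hst : s < t) (htN : t < N)
    (a : ℕ → ℕ → ℝ)
    (hnn : ∀ k i, 0 ≤ a k i)
    (hIR : ∀ k i, k < i → a k i = 0)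
    (hMON : ∀ i j, i ≤ j → j < N →
      ∑ k ∈ Finset.Ico j N, a k j ≤ ∑ k ∈ Finset.Ico i N, a k i)
    (hICrs : ∑ k ∈ Finset.Ico r N,
        ((k : ℝ) / ((N : ℝ) - 1) - (r : ℝ) / ((N : ℝ) - 1)) * a k s
      ≤ ∑ k ∈ Finset.Ico r N,
        ((k : ℝ) / ((N : ℝ) - 1) - (r : ℝ) / ((N : ℝ) - 1)) * a k r)
    (hICst : ∑ k ∈ Finset.Ico s N,
        ((k : ℝ) / ((N : ℝ) - 1) - (s : ℝ) / ((N : ℝ) - 1)) * a k t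
      ≤ ∑ k ∈ Finset.Ico s N,
        ((k : ℝ) / ((N : ℝ) - 1) - (s : ℝ) / ((N : ℝ) - 1)) * a k s) :
    ∑ k ∈ Finset.Ico r N,
        ((k : ℝ) / ((N : ℝ) - 1) - (r : ℝ) / ((N : ℝ) - 1)) * a k t
      ≤ ∑ k ∈ Finset.Ico r N,
        ((k : ℝ) / ((N : ℝ) - 1) - (r : ℝ) / ((N : ℝ) - 1)) * a k r := by
  have hd : (0:ℝ) < (N : ℝ) - 1 := by
    have : (2:ℝ) ≤ (N:ℝ) := by exact_mod_cast hN
    linarith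
  -- rewrite all sums in the normalized form: divide by (N-1)
  have key : ∀ (i j : ℕ) (c : ℝ),
      ∑ k ∈ Finset.Ico i N, ((k : ℝ) / ((N : ℝ) - 1) - c / ((N : ℝ) - 1)) * a k j
        = (1 / ((N:ℝ)-1)) * ∑ k ∈ Finset.Ico i N, ((k : ℝ) - c) * a k j := by
    intro i j c
    rw [Finset.mul_sum]
    apply Finset.sum_congr rfl
    intro k _
    field_simp
  rw [key, key] at hICrs hICst ⊢
  have h1 : (0:ℝ) < 1 / ((N:ℝ)-1) := by positivity
  rw [mul_le_mul_iff_of_pos_left h1] at hICrs hICst ⊢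
  -- unnormalized quantities
  set θr : ℝ := (r : ℝ)
  set θs : ℝ := (s : ℝ)
  have hθ : θr ≤ θs := by show (r:ℝ) ≤ (s:ℝ); exact_mod_cast hrs.le
  -- restrict sums
  have ht' : ∀ k, k < t → a k t = 0 := fun k hk => hIR k t hk
  have hs' : ∀ k, k < s → a k s = 0 := fun k hk => hIR k s hk
  have e1 : ∑ k ∈ Finset.Ico r N, ((k : ℝ) - θr) * a k t
      = ∑ k ∈ Finset.Ico s N, ((k : ℝ) - θr) * a k t := by
    rw [restrict_sum N r t (by omega) a ht', restrict_sum N s t (by omega) a ht']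
  have e2 : ∑ k ∈ Finset.Ico r N, ((k : ℝ) - θr) * a k s
      = ∑ k ∈ Finset.Ico s N, ((k : ℝ) - θr) * a k s := by
    rw [restrict_sum N r s (by omega) a hs']
  -- shifted versions over Ico s N, but with a k t the sum over Ico s N equals Ico t N;
  -- use pointwise shift on Ico s N directly
  have shift : ∀ (j : ℕ), ∑ k ∈ Finset.Ico s N, ((k : ℝ) - θr) * a k j
      = ∑ k ∈ Finset.Ico s N, ((k : ℝ) - θs) * a k j
        + (θs - θr) * ∑ k ∈ Finset.Ico s N, a k j := by
    intro j
    rw [Finset.mul_sum, ← Finset.sum_add_distrib]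
    apply Finset.sum_congr rfl
    intro k _
    ring
  rw [e1, shift t]
  rw [e2, shift s] at hICrs
  -- P(t) over Ico s N equals over Ico t N
  have ePt : ∑ k ∈ Finset.Ico s N, a k t = ∑ k ∈ Finset.Ico t N, a k t := by
    have := restrict_sum N s t (by omega) a ht' (fun _ => 1)
    simpa using this
  have hPmon : ∑ k ∈ Finset.Ico t N, a k t ≤ ∑ k ∈ Finset.Ico s N, a k s :=
    hMON s t (by omega) htN
  have hmul : (θs - θr) * ∑ k ∈ Finset.Ico s N, a k t
      ≤ (θs - θr) * ∑ k ∈ Finset.Ico s N, a k s := by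
    rw [ePt]
    exact mul_le_mul_of_nonneg_left hPmon (by linarith)
  linarith
end

section
/- Suppose 1/F is convex on the grid, i.e. 2/F(i) ≤ 1/F(i-1) + 1/F(i+1) for all 0 < i < N-1, and let a be a feasible direct mechanism (ex-post IR, all IC constraints IC_{i,j}, agent feasibility ∑_k a(k,i) ≤ 1). Define c(k) = ∑_{j=0}^{k} a(k,j)·f(j)/F(k). Then ∑_{k=0}^{N-1} c(k) ≤ ∑_{k=0}^{N-1} a(k,0) ≤ 1; in particular the common lottery ã(k,i) = c(k)·1[i ≤ k] satisfies agent feasibility for every type. -/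
open Finset

namespace Stmt8Aux

noncomputable def P (N : ℕ) (a : ℕ → ℕ → ℝ) (i j : ℕ) : ℝ :=
  ∑ k ∈ Ico i N, ((k : ℝ) - (i : ℝ)) * a k j

noncomputable def tau (N : ℕ) (a : ℕ → ℕ → ℝ) (m j : ℕ) : ℝ :=
  ∑ k ∈ Ico m N, a k j

noncomputable def dd (F : ℕ → ℝ) (i : ℕ) : ℝ := 1 / F i - 1 / F (i + 1)

noncomputable def QQ (N : ℕ) (f : ℕ → ℝ) (a : ℕ → ℕ → ℝ) (i : ℕ) : ℝ :=
  ∑ j ∈ range (i + 1), f j * P N a i j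

/-- swap a lower-triangular double sum -/
lemma sum_swap_lower (t : ℕ → ℕ → ℝ) : ∀ M : ℕ,
    ∑ k ∈ range M, ∑ j ∈ range (k + 1), t k j
      = ∑ j ∈ range M, ∑ k ∈ Ico j M, t k j
  | 0 => by simp
  | (M + 1) => by
    have h1 : ∀ j ∈ range M, ∑ k ∈ Ico j (M + 1), t k j
        = ∑ k ∈ Ico j M, t k j + t M j := fun j hj =>
      Finset.sum_Ico_succ_top (le_of_lt (Finset.mem_range.mp hj)) _
    have h2 : ∑ k ∈ Ico M (M + 1), t k M = t M M := by
      rw [Finset.sum_Ico_succ_top le_rfl, Finset.Ico_self, Finset.sum_empty, zero_add]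
    have hr : ∑ j ∈ range (M + 1), ∑ k ∈ Ico j (M + 1), t k j
        = ∑ j ∈ range M, (∑ k ∈ Ico j M, t k j + t M j) + t M M := by
      rw [Finset.sum_range_succ, h2, Finset.sum_congr rfl h1]
    rw [Finset.sum_range_succ, sum_swap_lower t M, hr, Finset.sum_add_distrib,
      Finset.sum_range_succ]
    ring

/-- swap a triangular double sum over `Ico` -/
lemma sum_swap_Ico (j : ℕ) (h : ℕ → ℕ → ℝ) : ∀ M : ℕ,
    ∑ k ∈ Ico j M, ∑ i ∈ Ico j k, h i k
      = ∑ i ∈ Ico j M, ∑ k ∈ Ico (i + 1) M, h i k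
  | 0 => by simp
  | (M + 1) => by
    by_cases hjM : j ≤ M
    · rw [Finset.sum_Ico_succ_top hjM, sum_swap_Ico j h M, Finset.sum_Ico_succ_top hjM]
      have h1 : ∀ i ∈ Ico j M, ∑ k ∈ Ico (i + 1) (M + 1), h i k
          = ∑ k ∈ Ico (i + 1) M, h i k + h i M := fun i hi =>
        Finset.sum_Ico_succ_top (Finset.mem_Ico.mp hi).2 _
      rw [Finset.sum_congr rfl h1, Finset.sum_add_distrib]
      have h2 : ∑ k ∈ Ico (M + 1) (M + 1), h M k = 0 := by simp
      rw [h2]; ring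
    · have hle : M + 1 ≤ j := by omega
      simp [Finset.Ico_eq_empty_of_le hle]

lemma telescope (G : ℕ → ℝ) {m n : ℕ} (h : m ≤ n) :
    ∑ i ∈ Ico m n, (G i - G (i + 1)) = G m - G n := by
  induction n, h using Nat.le_induction with
  | base => simp
  | succ n hmn ih => rw [Finset.sum_Ico_succ_top hmn, ih]; ring

/-- the pointwise coefficient identity -/
lemma coeff_id {A B C fa fb : ℝ} (hA : A ≠ 0) (hB : B ≠ 0) (hC : C ≠ 0)
    (h1 : B = A + fa) (h2 : C = B + fb) :
    ((1 / B - 1 / C) - (1 / A - 1 / B)) * B + (1 / A - 1 / B) * fa = fb / C - fa / B := by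
  have hfa : fa = B - A := by linarith
  have hfb : fb = C - B := by linarith
  subst hfa hfb
  field_simp
  ring

/-- generic index shift with vanishing top term -/
lemma shift_sum {N : ℕ} (s q : ℕ → ℝ) (hqN : q N = 0) :
    ∑ i ∈ range N, s i * q (i + 1) = ∑ i ∈ Ico 1 N, s (i - 1) * q i := by
  rcases Nat.eq_zero_or_pos N with h0 | hN0
  · subst h0; simp
  rw [Finset.sum_Ico_eq_sum_range]
  have h1 : ∀ i ∈ range (N - 1), s (1 + i - 1) * q (1 + i) = s i * q (i + 1) := by
    intro i _
    congr 1
    · congr 1; omega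
    · congr 1; omega
  rw [Finset.sum_congr rfl h1]
  obtain ⟨M, rfl⟩ : ∃ M, N = M + 1 := ⟨N - 1, by omega⟩
  rw [Finset.sum_range_succ]
  simp [hqN]

/-- Abel summation with vanishing top term -/
lemma abel_sum {N : ℕ} (hN0 : 0 < N) (s q : ℕ → ℝ) (hqN : q N = 0) :
    ∑ i ∈ range N, s i * (q i - q (i + 1))
      = s 0 * q 0 + ∑ i ∈ Ico 1 N, (s i - s (i - 1)) * q i := by
  have e : ∀ i ∈ range N, s i * (q i - q (i + 1)) = s i * q i - s i * q (i + 1) := by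
    intro i _; ring
  rw [Finset.sum_congr rfl e, Finset.sum_sub_distrib, shift_sum s q hqN]
  rw [Finset.range_eq_Ico, Finset.sum_eq_sum_Ico_succ_bot hN0]
  have e2 : ∀ i ∈ Ico 1 N, (s i - s (i - 1)) * q i = s i * q i - s (i - 1) * q i := by
    intro i _; ring
  rw [Finset.sum_congr rfl e2, Finset.sum_sub_distrib]
  ring

end Stmt8Aux

open Stmt8Aux

/-- Main theorem (common-lottery feasibility): if `1/F` is convex on the grid,
then for any feasible direct mechanism `a`, the constructed common lottery
`c(k) = ∑_{j≤k} a(k,j)·f(j)/F(k)` satisfies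
`∑_k c(k) ≤ ∑_k a(k,0) ≤ 1`; in particular the common lottery satisfies
agent feasibility for every type. -/
theorem stmt_8 (N : ℕ) (hN : 2 ≤ N) (f F : ℕ → ℝ)
    (hfpos : ∀ i, i < N → 0 < f i)
    (hF : ∀ k, F k = ∑ j ∈ Finset.range (k + 1), f j)
    (hconv : ∀ i, 0 < i → i + 1 < N → 2 / F i ≤ 1 / F (i - 1) + 1 / F (i + 1))
    (a : ℕ → ℕ → ℝ)
    (hnn : ∀ k i, 0 ≤ a k i)
    (hIR : ∀ k i, k < i → a k i = 0)
    (hIC : ∀ i, i < N → ∀ j, j < N →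
      ∑ k ∈ Finset.Ico i N, ((k : ℝ) / ((N : ℝ) - 1) - (i : ℝ) / ((N : ℝ) - 1)) * a k j
        ≤ ∑ k ∈ Finset.Ico i N, ((k : ℝ) / ((N : ℝ) - 1) - (i : ℝ) / ((N : ℝ) - 1)) * a k i)
    (hagent : ∀ i, i < N → ∑ k ∈ Finset.range N, a k i ≤ 1) :
    (∑ k ∈ Finset.range N, ∑ j ∈ Finset.range (k + 1), a k j * f j / F k
        ≤ ∑ k ∈ Finset.range N, a k 0)
    ∧ (∑ k ∈ Finset.range N, a k 0 ≤ 1)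
    ∧ (∀ i, i < N →
        ∑ k ∈ Finset.Ico i N, ∑ j ∈ Finset.range (k + 1), a k j * f j / F k ≤ 1) := by
  have hN0 : 0 < N := by omega
  -- positivity of F on the grid
  have hFpos : ∀ k, k < N → 0 < F k := by
    intro k hk
    rw [hF]
    apply Finset.sum_pos
    · intro j hj
      have : j < N := by have := Finset.mem_range.mp hj; omega
      exact hfpos j this
    · exact ⟨0, Finset.mem_range.mpr (Nat.succ_pos k)⟩
  have hFrec : ∀ k, F (k + 1) = F k + f (k + 1) := by
    intro k; rw [hF, hF, Finset.sum_range_succ]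
  have hF0 : F 0 = f 0 := by rw [hF 0, Finset.sum_range_one]
  -- IC in clean form
  have hP : ∀ i, i < N → ∀ j, j < N → P N a i j ≤ P N a i i := by
    intro i hi j hj
    have hc : (0 : ℝ) < (N : ℝ) - 1 := by
      have : (2 : ℝ) ≤ (N : ℝ) := by exact_mod_cast hN
      linarith
    have h := hIC i hi j hj
    have e : ∀ b : ℕ → ℝ,
        ∑ k ∈ Ico i N, ((k : ℝ) / ((N : ℝ) - 1) - (i : ℝ) / ((N : ℝ) - 1)) * b k
          = (∑ k ∈ Ico i N, ((k : ℝ) - (i : ℝ)) * b k) / ((N : ℝ) - 1) := by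
      intro b
      rw [Finset.sum_div]
      exact Finset.sum_congr rfl fun k _ => by ring
    rw [e (fun k => a k j), e (fun k => a k i)] at h
    exact (div_le_div_iff_of_pos_right hc).mp h
  -- τ identity
  have tau_eq : ∀ i j : ℕ, i < N → tau N a (i + 1) j = P N a i j - P N a (i + 1) j := by
    intro i j hi
    unfold tau P
    rw [Finset.sum_eq_sum_Ico_succ_bot hi (fun k => ((k : ℝ) - (i : ℝ)) * a k j)]
    rw [sub_self, zero_mul, zero_add, ← Finset.sum_sub_distrib]
    apply Finset.sum_congr rfl
    intro k _
    push_cast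
    ring
  -- boundary vanishing
  have hPN : ∀ j, P N a N j = 0 := by intro j; unfold P; simp
  have hPN1 : ∀ j, P N a (N - 1) j = 0 := by
    intro j
    unfold P
    apply Finset.sum_eq_zero
    intro k hk
    obtain ⟨h1, h2⟩ := Finset.mem_Ico.mp hk
    have : k = N - 1 := by omega
    subst this
    rw [sub_self, zero_mul]
  have hQN : QQ N f a N = 0 := by
    unfold QQ
    apply Finset.sum_eq_zero
    intro j _
    rw [hPN]; ring
  have hQ0 : QQ N f a 0 = f 0 * P N a 0 0 := by
    unfold QQ; rw [zero_add, Finset.sum_range_one]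
  have huN : f N * P N a N N = 0 := by rw [hPN]; ring
  -- step 1 : per-type decomposition
  have step1 : ∀ j, j < N → ∑ k ∈ Ico j N, a k j * f j / F k
      = (f j / F j) * tau N a j j - ∑ i ∈ Ico j N, dd F i * (f j * tau N a (i + 1) j) := by
    intro j hj
    have hper : ∀ k ∈ Ico j N, a k j * f j / F k
        = f j / F j * a k j - ∑ i ∈ Ico j k, dd F i * (f j * a k j) := by
      intro k hk
      obtain ⟨hjk, hkN⟩ := Finset.mem_Ico.mp hk
      have htel : ∑ i ∈ Ico j k, dd F i = 1 / F j - 1 / F k := by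
        have := telescope (fun i => 1 / F i) hjk
        simpa [dd] using this
      rw [← Finset.sum_mul, htel]
      ring
    rw [Finset.sum_congr rfl hper, Finset.sum_sub_distrib]
    congr 1
    · unfold tau
      rw [Finset.mul_sum]
    · rw [sum_swap_Ico j (fun i k => dd F i * (f j * a k j)) N]
      apply Finset.sum_congr rfl
      intro i _
      unfold tau
      rw [Finset.mul_sum, Finset.mul_sum]
  -- step 1 summed: the grand decomposition
  have S1 : ∑ k ∈ range N, ∑ j ∈ range (k + 1), a k j * f j / F k
      = ∑ j ∈ range N, (f j / F j) * tau N a j j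
        - ∑ i ∈ range N, dd F i * (∑ j ∈ range (i + 1), f j * tau N a (i + 1) j) := by
    rw [sum_swap_lower (fun k j => a k j * f j / F k) N]
    have e1 : ∀ j ∈ range N, ∑ k ∈ Ico j N, a k j * f j / F k
        = (f j / F j) * tau N a j j - ∑ i ∈ Ico j N, dd F i * (f j * tau N a (i + 1) j) :=
      fun j hj => step1 j (Finset.mem_range.mp hj)
    rw [Finset.sum_congr rfl e1, Finset.sum_sub_distrib]
    congr 1
    rw [← sum_swap_lower (fun i j => dd F i * (f j * tau N a (i + 1) j)) N]
    apply Finset.sum_congr rfl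
    intro i _
    rw [Finset.mul_sum]
  -- rewrite the subtracted double sum via Q and Abel summation
  have hW : ∀ i ∈ range N, dd F i * (∑ j ∈ range (i + 1), f j * tau N a (i + 1) j)
      = dd F i * (QQ N f a i - QQ N f a (i + 1))
        + dd F i * (f (i + 1) * P N a (i + 1) (i + 1)) := by
    intro i hi
    have hiN := Finset.mem_range.mp hi
    have e : ∀ j ∈ range (i + 1), f j * tau N a (i + 1) j
        = f j * P N a i j - f j * P N a (i + 1) j := by
      intro j _
      rw [tau_eq i j hiN]; ring
    rw [Finset.sum_congr rfl e, Finset.sum_sub_distrib]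
    have : QQ N f a (i + 1) = ∑ j ∈ range (i + 1), f j * P N a (i + 1) j
        + f (i + 1) * P N a (i + 1) (i + 1) := by
      unfold QQ; rw [Finset.sum_range_succ]
    rw [this]
    unfold QQ
    ring
  have S2 : ∑ i ∈ range N, dd F i * (∑ j ∈ range (i + 1), f j * tau N a (i + 1) j)
      = dd F 0 * QQ N f a 0
        + ∑ i ∈ Ico 1 N, (dd F i - dd F (i - 1)) * QQ N f a i
        + ∑ i ∈ Ico 1 N, dd F (i - 1) * (f i * P N a i i) := by
    have S2a : ∑ i ∈ range N, dd F i * (QQ N f a i - QQ N f a (i + 1))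
        = dd F 0 * QQ N f a 0
          + ∑ i ∈ Ico 1 N, (dd F i - dd F (i - 1)) * QQ N f a i :=
      abel_sum hN0 (dd F) (QQ N f a) hQN
    have S2b : ∑ i ∈ range N, dd F i * (f (i + 1) * P N a (i + 1) (i + 1))
        = ∑ i ∈ Ico 1 N, dd F (i - 1) * (f i * P N a i i) :=
      shift_sum (dd F) (fun i => f i * P N a i i) huN
    rw [Finset.sum_congr rfl hW, Finset.sum_add_distrib, S2a, S2b]
  -- the two inequality steps
  have boundA : ∑ j ∈ Ico 1 N, (f j / F j) * tau N a j j
      ≤ ∑ j ∈ Ico 1 N, (f j / F j) * (P N a (j - 1) (j - 1) - P N a j j) := by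
    apply Finset.sum_le_sum
    intro j hj
    obtain ⟨hj1, hjN⟩ := Finset.mem_Ico.mp hj
    obtain ⟨m, rfl⟩ : ∃ m, j = m + 1 := ⟨j - 1, by omega⟩
    simp only [Nat.add_sub_cancel]
    have hmN : m < N := by omega
    have htau : tau N a (m + 1) (m + 1) = P N a m (m + 1) - P N a (m + 1) (m + 1) :=
      tau_eq m (m + 1) hmN
    have hle : tau N a (m + 1) (m + 1) ≤ P N a m m - P N a (m + 1) (m + 1) := by
      rw [htau]
      have := hP m hmN (m + 1) hjN
      linarith
    apply mul_le_mul_of_nonneg_left hle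
    exact le_of_lt (div_pos (hfpos _ hjN) (hFpos _ hjN))
  have boundB : ∑ i ∈ Ico 1 N, (dd F i - dd F (i - 1)) * (F i * P N a i i)
      ≤ ∑ i ∈ Ico 1 N, (dd F i - dd F (i - 1)) * QQ N f a i := by
    apply Finset.sum_le_sum
    intro i hi
    obtain ⟨hi1, hiN⟩ := Finset.mem_Ico.mp hi
    by_cases hcase : i + 1 < N
    · -- convexity gives dd F i - dd F (i-1) ≤ 0
      have hdmono : dd F i - dd F (i - 1) ≤ 0 := by
        have hcv := hconv i hi1 hcase
        obtain ⟨m, rfl⟩ : ∃ m, i = m + 1 := ⟨i - 1, by omega⟩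
        simp only [Nat.add_sub_cancel] at hcv ⊢
        unfold dd
        have h2 : (2 : ℝ) / F (m + 1) = 1 / F (m + 1) + 1 / F (m + 1) := by ring
        rw [h2] at hcv
        linarith
      have hQle : QQ N f a i ≤ F i * P N a i i := by
        unfold QQ
        rw [hF i, Finset.sum_mul]
        apply Finset.sum_le_sum
        intro j hj
        have hjN : j < N := by have := Finset.mem_range.mp hj; omega
        exact mul_le_mul_of_nonneg_left (hP i hiN j hjN) (le_of_lt (hfpos j hjN))
      exact mul_le_mul_of_nonpos_left hQle hdmono
    · -- i = N - 1 : both sides vanish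
      have hi' : i = N - 1 := by omega
      have h1 : P N a i i = 0 := by rw [hi']; exact hPN1 _
      have h2 : QQ N f a i = 0 := by
        unfold QQ
        apply Finset.sum_eq_zero
        intro j _
        rw [hi', hPN1]; ring
      rw [h1, h2]
      simp
  -- the final coefficient identity (★)
  have hstar : ∑ j ∈ Ico 1 N, (f j / F j) * (P N a (j - 1) (j - 1) - P N a j j)
      - (∑ i ∈ Ico 1 N, (dd F i - dd F (i - 1)) * (F i * P N a i i)
        + ∑ i ∈ Ico 1 N, dd F (i - 1) * (f i * P N a i i))
      = dd F 0 * (f 0 * P N a 0 0) := by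
    have key : ∀ j ∈ Ico 1 N,
        (f j / F j) * (P N a (j - 1) (j - 1) - P N a j j)
          - ((dd F j - dd F (j - 1)) * (F j * P N a j j)
            + dd F (j - 1) * (f j * P N a j j))
        = (fun j => (f j / F j) * P N a (j - 1) (j - 1)) j
          - (fun j => (f j / F j) * P N a (j - 1) (j - 1)) (j + 1) := by
      intro j hj
      obtain ⟨hj1, hjN⟩ := Finset.mem_Ico.mp hj
      obtain ⟨m, rfl⟩ : ∃ m, j = m + 1 := ⟨j - 1, by omega⟩
      simp only [Nat.add_sub_cancel]
      by_cases hcase : m + 2 < N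
      · have hA := ne_of_gt (hFpos m (by omega))
        have hB := ne_of_gt (hFpos (m + 1) (by omega))
        have hC := ne_of_gt (hFpos (m + 2) (by omega))
        have hid := coeff_id hA hB hC (hFrec m) (hFrec (m + 1))
        unfold dd
        linear_combination (-(P N a (m + 1) (m + 1))) * hid
      · have hm1 : m + 1 = N - 1 := by omega
        have h0 : P N a (m + 1) (m + 1) = 0 := by rw [hm1]; exact hPN1 _
        rw [h0]
        ring
    have hsum : ∑ j ∈ Ico 1 N,
        ((f j / F j) * (P N a (j - 1) (j - 1) - P N a j j)
          - ((dd F j - dd F (j - 1)) * (F j * P N a j j)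
            + dd F (j - 1) * (f j * P N a j j)))
        = (f 1 / F 1) * P N a (1 - 1) (1 - 1)
          - (f N / F N) * P N a (N - 1) (N - 1) := by
      rw [Finset.sum_congr rfl key]
      exact telescope (fun j => (f j / F j) * P N a (j - 1) (j - 1)) (by omega : 1 ≤ N)
    rw [Finset.sum_sub_distrib, Finset.sum_add_distrib] at hsum
    have hN1 : P N a (N - 1) (N - 1) = 0 := hPN1 _
    rw [hN1, mul_zero, sub_zero] at hsum
    have hco : (f 1 / F 1) * P N a (1 - 1) (1 - 1) = dd F 0 * (f 0 * P N a 0 0) := by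
      have hA : f 0 ≠ 0 := ne_of_gt (hfpos 0 (by omega))
      have hB : F 1 ≠ 0 := ne_of_gt (hFpos 1 (by omega))
      have h1 : F 1 = f 0 + f 1 := by rw [hFrec 0, hF0]
      have hg1 : f 1 / F 1 = dd F 0 * f 0 := by
        unfold dd
        rw [hF0]
        field_simp
        linear_combination (-1 : ℝ) * h1
      norm_num [hg1]
      ring
    rw [hco] at hsum
    linarith [hsum]
  -- assemble part 1
  have part1 : ∑ k ∈ range N, ∑ j ∈ range (k + 1), a k j * f j / F k
      ≤ ∑ k ∈ range N, a k 0 := by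
    have hg0 : (f 0 / F 0) = 1 := by
      rw [hF0]; exact div_self (ne_of_gt (hfpos 0 hN0))
    have hpeel : ∑ j ∈ range N, (f j / F j) * tau N a j j
        = tau N a 0 0 + ∑ j ∈ Ico 1 N, (f j / F j) * tau N a j j := by
      rw [Finset.range_eq_Ico, Finset.sum_eq_sum_Ico_succ_bot hN0, hg0, one_mul]
    have htau00 : tau N a 0 0 = ∑ k ∈ range N, a k 0 := by
      unfold tau; rw [Finset.range_eq_Ico]
    rw [S1, S2, hpeel, hQ0]
    have := boundA
    have := boundB
    have := hstar
    linarith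
  have part2 : ∑ k ∈ range N, a k 0 ≤ 1 := hagent 0 hN0
  refine ⟨part1, part2, ?_⟩
  intro i hi
  have hcnn : ∀ k ∈ range N, 0 ≤ ∑ j ∈ range (k + 1), a k j * f j / F k := by
    intro k hk
    apply Finset.sum_nonneg
    intro j hj
    have hjN : j < N := by
      have := Finset.mem_range.mp hj; have := Finset.mem_range.mp hk; omega
    exact div_nonneg (mul_nonneg (hnn _ _) (le_of_lt (hfpos j hjN)))
      (le_of_lt (hFpos k (Finset.mem_range.mp hk)))
  calc ∑ k ∈ Ico i N, ∑ j ∈ range (k + 1), a k j * f j / F k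
      ≤ ∑ k ∈ range N, ∑ j ∈ range (k + 1), a k j * f j / F k := by
        apply Finset.sum_le_sum_of_subset_of_nonneg
        · rw [Finset.range_eq_Ico]
          exact Finset.Ico_subset_Ico (Nat.zero_le i) le_rfl
        · intro k hk _
          exact hcnn k hk
    _ ≤ ∑ k ∈ range N, a k 0 := part1
    _ ≤ 1 := part2
end

section
/- Let s ∈ ℝ≥0^N be a target allocation vector and F positive on the grid. The common lottery with c(k) = s_k/(D·F(k)) where D = ∑_{k=0}^{N-1} s_k/F(k) is feasible (each type's total probability is at most 1, with equality for type 0) and allocates exactly mass s_k to each position k when the agent population has mass D and type distribution f with CDF F: D·∑_{i=0}^{k} c(k)·f(i) = s_k. -/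
/-- The common lottery `c(k) = s_k/(D·F(k))` with `D = ∑_k s_k/F(k)` is
feasible (each type's total allocation probability is at most `1`, with
equality for the lowest type) and allocates exactly mass `s_k` to each
position `k`. -/
theorem stmt_11 (N : ℕ) (hN : 1 ≤ N) (s f F : ℕ → ℝ) (D : ℝ)
    (hs : ∀ k, k < N → 0 ≤ s k)
    (hfpos : ∀ i, i < N → 0 < f i)
    (hF : ∀ k, F k = ∑ j ∈ Finset.range (k + 1), f j)
    (hD : D = ∑ k ∈ Finset.range N, s k / F k) (hDpos : 0 < D) :
    (∑ k ∈ Finset.range N, s k / (D * F k) = 1) ∧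
    (∀ i, i < N → ∑ k ∈ Finset.Ico i N, s k / (D * F k) ≤ 1) ∧
    (∀ k, k < N →
      D * ∑ i ∈ Finset.range (k + 1), (s k / (D * F k)) * f i = s k) := by
  have hFpos : ∀ k, k < N → 0 < F k := by
    intro k hk
    rw [hF]
    apply Finset.sum_pos
    · intro j hj
      exact hfpos j (lt_of_lt_of_le (Finset.mem_range.mp hj) hk)
    · exact ⟨0, Finset.mem_range.mpr (Nat.succ_pos k)⟩
  have h1 : ∑ k ∈ Finset.range N, s k / (D * F k) = 1 := by
    have : ∀ k ∈ Finset.range N, s k / (D * F k) = (s k / F k) * D⁻¹ := by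
      intro k _
      rw [mul_comm D (F k), div_mul_eq_div_div, div_eq_mul_inv]
    rw [Finset.sum_congr rfl this, ← Finset.sum_mul, ← hD,
      mul_inv_cancel₀ hDpos.ne']
  refine ⟨h1, ?_, ?_⟩
  · intro i hi
    calc ∑ k ∈ Finset.Ico i N, s k / (D * F k)
        ≤ ∑ k ∈ Finset.range N, s k / (D * F k) := by
          apply Finset.sum_le_sum_of_subset_of_nonneg
          · intro x hx
            exact Finset.mem_range.mpr (Finset.mem_Ico.mp hx).2
          · intro k hk _
            exact div_nonneg (hs k (Finset.mem_range.mp hk))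
              (mul_nonneg hDpos.le (hFpos k (Finset.mem_range.mp hk)).le)
      _ = 1 := h1
  · intro k hk
    have hFk : F k ≠ 0 := (hFpos k hk).ne'
    rw [← Finset.mul_sum, ← hF]
    field_simp
end

section
/- In the setting of the previous contraction, the modified mechanism also preserves IC constraints toward type i from all other types: (a) types j ≥ k+1 are unaffected since a'(m,i) = a(m,i) for all m ≥ k+1 except m = k+1, where a'(k+1,i) < a(k+1,i), making mimicking type i weakly less attractive; (b) types j ≤ k-1 value the contraction at exactly the old value by linearity; (c) type k strictly loses from mimicking i since the only payoff-relevant change at or above θ_k is the decrease at position k+1. Formally: for every type j ≠ i, ∑_{m≥j}(x_m - θ_j)·a'(m,i) ≤ ∑_{m≥j}(x_m - θ_j)·a(m,i). -/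
/-- The mean-preserving contraction of type `i`'s lottery around position `k`
makes mimicking type `i` weakly less attractive for every other type `j`:
for all `j ≠ i`, `∑_{m≥j}(x_m - θ_j)·a'(m,i) ≤ ∑_{m≥j}(x_m - θ_j)·a(m,i)`. -/
theorem stmt_14 (N : ℕ) (hN : 2 ≤ N) (c : ℕ → ℝ) (hc : ∀ m, 0 ≤ c m)
    (a a' : ℕ → ℕ → ℝ)
    (ha : ∀ m i, a m i = if i ≤ m then c m else 0)
    (k i : ℕ) (hik : i < k) (hkN : k + 1 < N)
    (hpos : 0 < c (k - 1) ∧ 0 < c k ∧ 0 < c (k + 1))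
    (ε : ℝ) (hε : 0 < ε)
    (ha' : ∀ m j, a' m j =
      if j = i then
        (if m = k - 1 then a m i - ε
         else if m = k then a m i + 2 * ε
         else if m = k + 1 then a m i - ε
         else a m i)
      else a m j) :
    ∀ j, j < N → j ≠ i →
      ∑ m ∈ Finset.Ico j N,
          ((m : ℝ) / ((N : ℝ) - 1) - (j : ℝ) / ((N : ℝ) - 1)) * a' m i
        ≤ ∑ m ∈ Finset.Ico j N,
          ((m : ℝ) / ((N : ℝ) - 1) - (j : ℝ) / ((N : ℝ) - 1)) * a m i := by
  intro j hjN hji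
  have hk1 : 1 ≤ k := by omega
  have hN1 : (1:ℝ) < (N:ℝ) := by exact_mod_cast lt_of_lt_of_le one_lt_two hN
  have hNpos : (0:ℝ) < (N:ℝ) - 1 := by linarith
  set W : ℕ → ℝ := fun m => (m:ℝ)/((N:ℝ)-1) - (j:ℝ)/((N:ℝ)-1) with hW
  rw [← sub_nonpos, ← Finset.sum_sub_distrib]
  have key : ∀ m ∈ Finset.Ico j N, W m * a' m i - W m * a m i =
      (if (k-1) = m then W m * (-ε) else 0) + (if k = m then W m * (2*ε) else 0)
        + (if (k+1) = m then W m * (-ε) else 0) := by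
    intro m _
    rw [ha' m i, if_pos rfl]
    split_ifs <;> first | ring1 | omega
  rw [Finset.sum_congr rfl key, Finset.sum_add_distrib, Finset.sum_add_distrib,
    Finset.sum_ite_eq, Finset.sum_ite_eq, Finset.sum_ite_eq]
  have hkm1 : ((k - 1 : ℕ) : ℝ) = (k : ℝ) - 1 := by
    push_cast [Nat.cast_sub hk1]; ring
  simp only [Finset.mem_Ico, hW]
  rcases lt_trichotomy j k with hjk | hjk | hjk
  · rw [if_pos ⟨by omega, by omega⟩, if_pos ⟨by omega, by omega⟩,
      if_pos ⟨by omega, by omega⟩]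
    rw [hkm1]
    push_cast
    field_simp
    ring_nf
    nlinarith [hNpos]
  · subst hjk
    rw [if_neg (by omega), if_pos ⟨by omega, by omega⟩, if_pos ⟨by omega, by omega⟩]
    push_cast
    have h1 : ((j:ℝ)/((N:ℝ)-1) - (j:ℝ)/((N:ℝ)-1)) = 0 := by ring
    have h2 : ((j:ℝ)+1)/((N:ℝ)-1) - (j:ℝ)/((N:ℝ)-1) = 1/((N:ℝ)-1) := by
      field_simp; ring
    have h3 : (0:ℝ) ≤ 1/((N:ℝ)-1) := by positivity
    nlinarith
  · rw [if_neg (by omega), if_neg (by omega)]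
    by_cases h3 : j = k + 1
    · subst h3
      rw [if_pos ⟨le_rfl, by omega⟩]
      simp
    · rw [if_neg (by omega)]; simp
end

section
/- Suppose 1/F is convex on the grid and V : ℝ^N → ℝ is any objective. If s* maximizes V(s) over the set {s ∈ ℝ≥0^N : s_k ≤ g(k) for all k, ∑_k s_k/F(k) ≤ D}, then the common lottery with c(k) = s*_k/(D·F(k)) is an optimal feasible direct mechanism: no feasible direct mechanism a (satisfying IC, ex-post IR, position capacities g, agent feasibility with population mass D) achieves V(s(a)) > V(s*), where s_k(a) = D·∑_{i≤k} a(k,i)·f(i). -/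
open Finset

namespace Stmt15Aux

noncomputable def dl (F : ℕ → ℝ) (t : ℕ) : ℝ := 1 / F t - 1 / F (t + 1)
noncomputable def ee (F : ℕ → ℝ) (u : ℕ) : ℝ := dl F (u - 1) - dl F u
noncomputable def Q (N : ℕ) (a : ℕ → ℕ → ℝ) (t i : ℕ) : ℝ :=
  ∑ k ∈ Ico t N, ((k : ℝ) - (t : ℝ)) * a k i
noncomputable def cc (N : ℕ) (a : ℕ → ℕ → ℝ) (i : ℕ) : ℝ := ∑ k ∈ range N, a k i
noncomputable def hh (f F : ℕ → ℝ) (u : ℕ) : ℝ := f u / F u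

section

variable {N : ℕ} {f F : ℕ → ℝ} {a : ℕ → ℕ → ℝ}

lemma Fpos (hfpos : ∀ i, i < N → 0 < f i) (hF : ∀ k, F k = ∑ j ∈ range (k + 1), f j)
    {k : ℕ} (hk : k < N) : 0 < F k := by
  rw [hF]
  apply Finset.sum_pos
  · intro j hj
    exact hfpos j (lt_of_lt_of_le (Finset.mem_range.1 hj) hk)
  · exact nonempty_range_add_one

/-- the convex-representation of `1/F` -/
lemma rep (hconv : ∀ i, 0 < i → i + 1 < N → 2 / F i ≤ 1 / F (i - 1) + 1 / F (i + 1))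
    {i k : ℕ} (hik : i ≤ k) (hk : k < N) :
    1 / F k = 1 / F i - ((k : ℝ) - (i : ℝ)) * dl F i
      + ∑ u ∈ Ico (i + 1) (N - 1), ee F u * max ((k : ℝ) - (u : ℝ)) 0 := by
  induction k, hik using Nat.le_induction with
  | base =>
      have : ∀ u ∈ Ico (i + 1) (N - 1), ee F u * max ((i : ℝ) - (u : ℝ)) 0 = 0 := by
        intro u hu
        have h1 : i + 1 ≤ u := (Finset.mem_Ico.1 hu).1
        have : ((i : ℝ) - (u : ℝ)) ≤ 0 := by
          have : (i : ℝ) ≤ u := by exact_mod_cast le_of_lt h1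
          linarith
        rw [max_eq_right this, mul_zero]
      rw [Finset.sum_congr rfl this]
      simp
  | succ k hik ih =>
      have hkN : k < N := lt_of_lt_of_le (Nat.lt_succ_self k) (le_of_lt hk)
      have ihh := ih hkN
      have hkN1 : k + 1 ≤ N - 1 := by omega
      -- difference of the max-sums
      have hdiff : ∀ u ∈ Ico (i + 1) (N - 1),
          ee F u * max (((k:ℕ):ℝ) + 1 - (u : ℝ)) 0 - ee F u * max ((k : ℝ) - (u : ℝ)) 0
            = if u ∈ Ico (i+1) (k+1) then ee F u else 0 := by
        intro u hu
        by_cases huk : u ≤ k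
        · have h1 : (u : ℝ) ≤ k := by exact_mod_cast huk
          have hm1 : max (((k:ℕ):ℝ) + 1 - (u : ℝ)) 0 = (k:ℝ) + 1 - u := by
            rw [max_eq_left]; linarith
          have hm2 : max ((k : ℝ) - (u : ℝ)) 0 = (k:ℝ) - u := by
            rw [max_eq_left]; linarith
          have : u ∈ Ico (i+1) (k+1) := by
            rw [Finset.mem_Ico] at hu ⊢; omega
          rw [hm1, hm2, if_pos this]; ring
        · have h1 : (k : ℝ) + 1 ≤ u := by exact_mod_cast Nat.succ_le_of_lt (Nat.lt_of_not_le huk)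
          have hm1 : max (((k:ℕ):ℝ) + 1 - (u : ℝ)) 0 = 0 := by
            rw [max_eq_right]; linarith
          have hm2 : max ((k : ℝ) - (u : ℝ)) 0 = 0 := by
            rw [max_eq_right]; linarith
          have : u ∉ Ico (i+1) (k+1) := by
            rw [Finset.mem_Ico]; omega
          rw [hm1, hm2, if_neg this]; ring
      have hsub : Ico (i+1) (k+1) ⊆ Ico (i+1) (N-1) := by
        apply Finset.Ico_subset_Ico le_rfl hkN1
      have hS : ∑ u ∈ Ico (i + 1) (N - 1), ee F u * max (((k:ℕ):ℝ) + 1 - (u : ℝ)) 0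
          - ∑ u ∈ Ico (i + 1) (N - 1), ee F u * max ((k : ℝ) - (u : ℝ)) 0
          = ∑ u ∈ Ico (i+1) (k+1), ee F u := by
        rw [← Finset.sum_sub_distrib, Finset.sum_congr rfl hdiff, Finset.sum_ite_mem,
          Finset.inter_eq_right.mpr hsub]
      have htel : ∑ u ∈ Ico (i+1) (k+1), ee F u = dl F i - dl F k := by
        rw [Finset.sum_Ico_eq_sum_range]
        have : ∀ v ∈ range (k + 1 - (i+1)), ee F (i + 1 + v)
            = dl F (i + v) - dl F (i + (v+1)) := by
          intro v hv
          have h1 : i + 1 + v - 1 = i + v := by omega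
          have h2 : i + 1 + v = i + (v + 1) := by omega
          rw [ee, h1, h2]
        rw [Finset.sum_congr rfl this]
        have := Finset.sum_range_sub' (fun v => dl F (i + v)) (k + 1 - (i+1))
        rw [this]
        have : i + (k + 1 - (i + 1)) = k := by omega
        rw [this, Nat.add_zero]
      have hdl : 1 / F (k+1) = 1 / F k - dl F k := by rw [dl]; ring
      have hcast : ((k+1 : ℕ) : ℝ) = (k : ℝ) + 1 := by push_cast; ring
      rw [hcast] at *
      have : (∑ u ∈ Ico (i + 1) (N - 1), ee F u * max ((k:ℝ) + 1 - (u : ℝ)) 0)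
          = (∑ u ∈ Ico (i + 1) (N - 1), ee F u * max ((k : ℝ) - (u : ℝ)) 0)
            + (dl F i - dl F k) := by
        rw [← htel, ← hS]; ring
      rw [hdl, ihh, this]
      ring

lemma Qnonneg (ha0 : ∀ k i, 0 ≤ a k i) (t i : ℕ) : 0 ≤ Q N a t i := by
  apply Finset.sum_nonneg
  intro k hk
  have : (t : ℝ) ≤ k := by exact_mod_cast (Finset.mem_Ico.1 hk).1
  exact mul_nonneg (by linarith) (ha0 k i)

lemma Qlast (hN : 1 ≤ N) (i : ℕ) : Q N a (N - 1) i = 0 := by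
  rw [Q]
  apply Finset.sum_eq_zero
  intro k hk
  have hk' := Finset.mem_Ico.1 hk
  have : k = N - 1 := by omega
  subst this
  rw [sub_self, zero_mul]

lemma Qmax {t : ℕ} (ht : t ≤ N) (i : ℕ) :
    ∑ k ∈ range N, a k i * max ((k : ℝ) - (t : ℝ)) 0 = Q N a t i := by
  rw [Finset.range_eq_Ico, ← Finset.sum_Ico_consecutive _ (Nat.zero_le t) ht]
  have h1 : ∀ k ∈ Ico 0 t, a k i * max ((k : ℝ) - (t : ℝ)) 0 = 0 := by
    intro k hk
    have : (k:ℝ) < t := by exact_mod_cast (Finset.mem_Ico.1 hk).2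
    rw [max_eq_right (by linarith), mul_zero]
  have h2 : ∀ k ∈ Ico t N, a k i * max ((k : ℝ) - (t : ℝ)) 0 = ((k : ℝ) - (t : ℝ)) * a k i := by
    intro k hk
    have : (t:ℝ) ≤ k := by exact_mod_cast (Finset.mem_Ico.1 hk).1
    rw [max_eq_left (by linarith)]; ring
  rw [Finset.sum_congr rfl h1, Finset.sum_congr rfl h2, Finset.sum_const_zero, zero_add, Q]

lemma Qlin (hatri : ∀ k i, k < i → a k i = 0) {i : ℕ} (hi : i ≤ N) :
    ∑ k ∈ range N, a k i * ((k : ℝ) - (i : ℝ)) = Q N a i i := by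
  rw [Finset.range_eq_Ico, ← Finset.sum_Ico_consecutive _ (Nat.zero_le i) hi]
  have h1 : ∀ k ∈ Ico 0 i, a k i * ((k : ℝ) - (i : ℝ)) = 0 := by
    intro k hk
    rw [hatri k i (Finset.mem_Ico.1 hk).2, zero_mul]
  have h2 : ∀ k ∈ Ico i N, a k i * ((k : ℝ) - (i : ℝ)) = ((k : ℝ) - (i : ℝ)) * a k i := by
    intro k _; ring
  rw [Finset.sum_congr rfl h1, Finset.sum_congr rfl h2, Finset.sum_const_zero, zero_add, Q]

/-- per-column identity -/
lemma colid (hconv : ∀ i, 0 < i → i + 1 < N → 2 / F i ≤ 1 / F (i - 1) + 1 / F (i + 1))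
    (hatri : ∀ k i, k < i → a k i = 0) {i : ℕ} (hi : i < N) :
    ∑ k ∈ range N, a k i * (1 / F k)
      = cc N a i * (1 / F i) - dl F i * Q N a i i
        + ∑ u ∈ Ico (i + 1) (N - 1), ee F u * Q N a u i := by
  have hpt : ∀ k ∈ range N, a k i * (1 / F k)
      = a k i * (1 / F i - ((k : ℝ) - (i : ℝ)) * dl F i
          + ∑ u ∈ Ico (i + 1) (N - 1), ee F u * max ((k : ℝ) - (u : ℝ)) 0) := by
    intro k hk
    rcases lt_or_ge k i with hki | hik
    · rw [hatri k i hki, zero_mul, zero_mul]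
    · rw [rep hconv hik (Finset.mem_range.1 hk)]
  rw [Finset.sum_congr rfl hpt]
  have expand : ∀ k ∈ range N, a k i * (1 / F i - ((k : ℝ) - (i : ℝ)) * dl F i
          + ∑ u ∈ Ico (i + 1) (N - 1), ee F u * max ((k : ℝ) - (u : ℝ)) 0)
      = a k i * (1 / F i) - dl F i * (a k i * ((k : ℝ) - (i : ℝ)))
        + ∑ u ∈ Ico (i + 1) (N - 1), ee F u * (a k i * max ((k : ℝ) - (u : ℝ)) 0) := by
    intro k _
    rw [mul_add, mul_sub, Finset.mul_sum]
    congr 1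
    · ring
    · apply Finset.sum_congr rfl; intro u _; ring
  rw [Finset.sum_congr rfl expand, Finset.sum_add_distrib, Finset.sum_sub_distrib,
    ← Finset.sum_mul, ← Finset.mul_sum, Qlin hatri (le_of_lt hi), Finset.sum_comm, cc]
  congr 1
  apply Finset.sum_congr rfl
  intro u hu
  rw [← Finset.mul_sum, Qmax]
  have := (Finset.mem_Ico.1 hu).2
  omega

lemma chain (hatri : ∀ k i, k < i → a k i = 0)
    (hQIC : ∀ i j, i < N → j < N → Q N a i j ≤ Q N a i i)
    {u : ℕ} (hu : u + 1 < N) :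
    Q N a (u + 1) (u + 1) + cc N a (u + 1) ≤ Q N a u u := by
  have h1 : Q N a u (u + 1) = Q N a (u + 1) (u + 1) + cc N a (u + 1) := by
    rw [Q, Finset.sum_eq_sum_Ico_succ_bot (by omega : u < N), sub_self, zero_mul, zero_add]
    have hpt : ∀ k ∈ Ico (u + 1) N, ((k : ℝ) - (u : ℝ)) * a k (u + 1)
        = ((k : ℝ) - ((u + 1 : ℕ) : ℝ)) * a k (u + 1) + a k (u + 1) := by
      intro k _
      push_cast
      ring
    rw [Finset.sum_congr rfl hpt, Finset.sum_add_distrib]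
    congr 1
    rw [cc, Finset.range_eq_Ico, ← Finset.sum_Ico_consecutive _ (Nat.zero_le (u+1)) (le_of_lt hu)]
    have : ∀ k ∈ Ico 0 (u+1), a k (u+1) = 0 := fun k hk =>
      hatri k (u+1) (Finset.mem_Ico.1 hk).2
    rw [Finset.sum_congr rfl this, Finset.sum_const_zero, zero_add]
  calc Q N a (u + 1) (u + 1) + cc N a (u + 1) = Q N a u (u + 1) := h1.symm
    _ ≤ Q N a u u := hQIC u (u+1) (by omega) hu

lemma Fsucc (hF : ∀ k, F k = ∑ j ∈ range (k + 1), f j) (u : ℕ) :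
    F (u + 1) = F u + f (u + 1) := by
  rw [hF, hF, Finset.sum_range_succ]

lemma idC (hfpos : ∀ i, i < N → 0 < f i) (hF : ∀ k, F k = ∑ j ∈ range (k + 1), f j)
    {u : ℕ} (hu : u + 1 < N) : F u * dl F u = f (u + 1) / F (u + 1) := by
  have h0 : (0:ℝ) < F u := Fpos hfpos hF (by omega)
  have h1 : (0:ℝ) < F (u + 1) := Fpos hfpos hF hu
  have h2 := Fsucc hF u
  rw [dl]
  field_simp
  rw [h2]
  ring

lemma eenn (hconv : ∀ i, 0 < i → i + 1 < N → 2 / F i ≤ 1 / F (i - 1) + 1 / F (i + 1))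
    {u : ℕ} (h0 : 0 < u) (h1 : u + 1 < N) : 0 ≤ ee F u := by
  have hc := hconv u h0 h1
  have h2 : u - 1 + 1 = u := by omega
  have h3 : (2:ℝ) / F u = 1 / F u + 1 / F u := by ring
  rw [ee, dl, dl, h2]
  linarith

lemma hhnn (hfpos : ∀ i, i < N → 0 < f i) (hF : ∀ k, F k = ∑ j ∈ range (k + 1), f j)
    {i : ℕ} (hi : i < N) : 0 ≤ hh f F i :=
  div_nonneg (le_of_lt (hfpos i hi)) (le_of_lt (Fpos hfpos hF hi))

/-- coefficient identity for `1 ≤ u < N-1` -/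
lemma coeff (hfpos : ∀ i, i < N → 0 < f i) (hF : ∀ k, F k = ∑ j ∈ range (k + 1), f j)
    {u : ℕ} (h0 : 0 < u) (h1 : u + 1 < N) :
    F (u - 1) * ee F u - f u * dl F u = hh f F u - hh f F (u + 1) := by
  have h2 : u - 1 + 1 = u := by omega
  have e1 : F (u - 1) * dl F (u - 1) = f u / F u := by
    have := idC hfpos hF (u := u - 1) (by omega)
    rwa [h2] at this
  have e2 : F u * dl F u = f (u + 1) / F (u + 1) := idC hfpos hF h1
  have e3 : F u = F (u - 1) + f u := by
    have := Fsucc hF (u - 1)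
    rwa [h2] at this
  rw [ee, hh, hh, mul_sub, e1]
  have : F (u - 1) * dl F u + f u * dl F u = f (u + 1) / F (u + 1) := by
    rw [← add_mul, ← e3, e2]
  linarith

/-- the double-sum rearrangement -/
lemma sumD (hfpos : ∀ i, i < N → 0 < f i) (hF : ∀ k, F k = ∑ j ∈ range (k + 1), f j)
    (hN : 2 ≤ N) :
    ∑ i ∈ range N, f i * (- (dl F i * Q N a i i)
        + ∑ u ∈ Ico (i + 1) (N - 1), ee F u * Q N a u u)
      = - (hh f F 1 * Q N a 0 0)
        + ∑ u ∈ Ico 1 (N - 1), (hh f F u - hh f F (u + 1)) * Q N a u u := by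
  have split : ∀ i ∈ range N, f i * (- (dl F i * Q N a i i)
        + ∑ u ∈ Ico (i + 1) (N - 1), ee F u * Q N a u u)
      = - (f i * dl F i * Q N a i i)
        + ∑ u ∈ Ico 1 (N - 1), (if u ∈ Ico (i + 1) (N - 1) then f i * (ee F u * Q N a u u) else 0) := by
    intro i hi
    have hsub : Ico (i + 1) (N - 1) ⊆ Ico 1 (N - 1) := Finset.Ico_subset_Ico (by omega) le_rfl
    rw [Finset.sum_ite_mem, Finset.inter_eq_right.mpr hsub, mul_add, Finset.mul_sum]
    congr 1
    ring
  rw [Finset.sum_congr rfl split, Finset.sum_add_distrib, Finset.sum_comm]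
  have inner : ∀ u ∈ Ico 1 (N - 1),
      ∑ i ∈ range N, (if u ∈ Ico (i + 1) (N - 1) then f i * (ee F u * Q N a u u) else 0)
        = F (u - 1) * ee F u * Q N a u u := by
    intro u hu
    have hu' := Finset.mem_Ico.1 hu
    have hrw : ∀ i ∈ range N, (if u ∈ Ico (i + 1) (N - 1) then f i * (ee F u * Q N a u u) else 0)
        = (if i ∈ range u then f i * (ee F u * Q N a u u) else 0) := by
      intro i _
      have hiff : (u ∈ Ico (i + 1) (N - 1)) ↔ (i ∈ range u) := by
        simp only [Finset.mem_Ico, Finset.mem_range]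
        omega
      exact if_congr hiff rfl rfl
    have hint : range N ∩ range u = range u := by
      apply Finset.inter_eq_right.mpr
      intro x hx
      simp only [Finset.mem_range] at hx ⊢
      omega
    rw [Finset.sum_congr rfl hrw, Finset.sum_ite_mem, hint, ← Finset.sum_mul]
    have h2 : u - 1 + 1 = u := by omega
    have : ∑ i ∈ range u, f i = F (u - 1) := by rw [hF, h2]
    rw [this]
    ring
  rw [Finset.sum_congr rfl inner]
  -- now handle the first (negative) sum
  have hsplit0 : ∑ i ∈ range N, - (f i * dl F i * Q N a i i)
      = - (f 0 * dl F 0 * Q N a 0 0) + ∑ i ∈ Ico 1 N, - (f i * dl F i * Q N a i i) := by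
    rw [Finset.range_eq_Ico, Finset.sum_eq_sum_Ico_succ_bot (by omega : 0 < N)]
  have htop : ∑ i ∈ Ico 1 N, - (f i * dl F i * Q N a i i)
      = ∑ i ∈ Ico 1 (N - 1), - (f i * dl F i * Q N a i i) := by
    have hN1 : N = (N - 1) + 1 := by omega
    rw [hN1, Finset.sum_Ico_succ_top (by omega : 1 ≤ N - 1)]
    rw [← hN1, Qlast (by omega)]
    simp
  have h00 : f 0 * dl F 0 = hh f F 1 := by
    have hF0 : f 0 = F 0 := by rw [hF]; simp
    have := idC hfpos hF (u := 0) (by omega)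
    rw [hF0, this, hh]
  rw [hsplit0, htop, h00, add_assoc, ← Finset.sum_add_distrib]
  have final : ∀ u ∈ Ico 1 (N - 1),
      - (f u * dl F u * Q N a u u) + F (u - 1) * ee F u * Q N a u u
        = (hh f F u - hh f F (u + 1)) * Q N a u u := by
    intro u hu
    have hu' := Finset.mem_Ico.1 hu
    have := coeff hfpos hF (u := u) (by omega) (by omega)
    calc - (f u * dl F u * Q N a u u) + F (u - 1) * ee F u * Q N a u u
        = (F (u - 1) * ee F u - f u * dl F u) * Q N a u u := by ring
      _ = (hh f F u - hh f F (u + 1)) * Q N a u u := by rw [this]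
  rw [Finset.sum_congr rfl final]

lemma claim (hfpos : ∀ i, i < N → 0 < f i) (hF : ∀ k, F k = ∑ j ∈ range (k + 1), f j)
    (ha0 : ∀ k i, 0 ≤ a k i) (hatri : ∀ k i, k < i → a k i = 0)
    (hQIC : ∀ i j, i < N → j < N → Q N a i j ≤ Q N a i i) :
    ∀ d m, m + d + 2 = N →
      ∑ i ∈ Ico (m + 1) N, hh f F i * cc N a i
        + ∑ u ∈ Ico (m + 1) (N - 1), (hh f F u - hh f F (u + 1)) * Q N a u u
      ≤ hh f F (m + 1) * Q N a m m := by
  intro d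
  induction d with
  | zero =>
      intro m hm
      have h1 : Ico (m + 1) N = {m + 1} := by
        rw [← hm]
        rw [show m + 0 + 2 = (m + 1) + 1 by omega]
        exact Nat.Ico_succ_singleton (m + 1)
      have h2 : Ico (m + 1) (N - 1) = ∅ := by
        have : N - 1 = m + 1 := by omega
        rw [this, Finset.Ico_self]
      rw [h1, h2, Finset.sum_singleton, Finset.sum_empty, add_zero]
      have hch := chain hatri hQIC (u := m) (by omega)
      have hq := Qnonneg (N := N) (a := a) ha0 (m + 1) (m + 1)
      exact mul_le_mul_of_nonneg_left (by linarith) (hhnn hfpos hF (by omega))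
  | succ d ih =>
      intro m hm
      have hIH := ih (m + 1) (by omega)
      have hch := chain hatri hQIC (u := m) (by omega)
      have hpos := hhnn hfpos hF (show m + 1 < N by omega)
      rw [Finset.sum_eq_sum_Ico_succ_bot (show m + 1 < N by omega),
        Finset.sum_eq_sum_Ico_succ_bot (show m + 1 < N - 1 by omega)]
      have key : hh f F (m + 1) * (cc N a (m + 1) + Q N a (m + 1) (m + 1))
          ≤ hh f F (m + 1) * Q N a m m :=
        mul_le_mul_of_nonneg_left (by linarith) hpos
      have expand : hh f F (m + 1) * (cc N a (m + 1) + Q N a (m + 1) (m + 1))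
          = hh f F (m + 1) * cc N a (m + 1) + hh f F (m + 1) * Q N a (m + 1) (m + 1) := by
        ring
      have expand2 : (hh f F (m + 1) - hh f F (m + 1 + 1)) * Q N a (m + 1) (m + 1)
          = hh f F (m + 1) * Q N a (m + 1) (m + 1)
            - hh f F (m + 1 + 1) * Q N a (m + 1) (m + 1) := by ring
      linarith

lemma budget (hN : 2 ≤ N) (hfpos : ∀ i, i < N → 0 < f i)
    (hF : ∀ k, F k = ∑ j ∈ range (k + 1), f j)
    (hconv : ∀ i, 0 < i → i + 1 < N → 2 / F i ≤ 1 / F (i - 1) + 1 / F (i + 1))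
    (ha0 : ∀ k i, 0 ≤ a k i) (hatri : ∀ k i, k < i → a k i = 0)
    (hQIC : ∀ i j, i < N → j < N → Q N a i j ≤ Q N a i i)
    (hfe : ∀ i, i < N → cc N a i ≤ 1) :
    ∑ k ∈ range N, (∑ i ∈ range (k + 1), a k i * f i) / F k ≤ 1 := by
  -- step 1 : rewrite as a sum over columns
  have step1 : ∑ k ∈ range N, (∑ i ∈ range (k + 1), a k i * f i) / F k
      = ∑ i ∈ range N, f i * (∑ k ∈ range N, a k i * (1 / F k)) := by
    have e1 : ∀ k ∈ range N, (∑ i ∈ range (k + 1), a k i * f i) / F k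
        = ∑ i ∈ range N, (a k i * f i) * (1 / F k) := by
      intro k hk
      have hext : ∑ i ∈ range (k + 1), a k i * f i = ∑ i ∈ range N, a k i * f i := by
        apply Finset.sum_subset (Finset.range_subset_range.mpr (Finset.mem_range.1 hk))
        intro i _ hnot
        have hki : k < i := by
          simp only [Finset.mem_range] at hnot
          omega
        rw [hatri k i hki, zero_mul]
      rw [hext, ← Finset.sum_mul]
      ring
    rw [Finset.sum_congr rfl e1, Finset.sum_comm]
    apply Finset.sum_congr rfl
    intro i _
    rw [Finset.mul_sum]
    apply Finset.sum_congr rfl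
    intro k _
    ring
  rw [step1]
  -- step 2/3 : apply the column identity and the IC bound
  have step3 : ∑ i ∈ range N, f i * (∑ k ∈ range N, a k i * (1 / F k))
      ≤ ∑ i ∈ range N, (hh f F i * cc N a i
          + (- (dl F i * Q N a i i) + ∑ u ∈ Ico (i + 1) (N - 1), ee F u * Q N a u u) * f i) := by
    apply Finset.sum_le_sum
    intro i hi
    have hiN := Finset.mem_range.1 hi
    rw [colid hconv hatri hiN]
    have hb : ∑ u ∈ Ico (i + 1) (N - 1), ee F u * Q N a u i
        ≤ ∑ u ∈ Ico (i + 1) (N - 1), ee F u * Q N a u u := by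
      apply Finset.sum_le_sum
      intro u hu
      have hu' := Finset.mem_Ico.1 hu
      exact mul_le_mul_of_nonneg_left
        (hQIC u i (by omega) hiN) (eenn hconv (by omega) (by omega))
    have hf := le_of_lt (hfpos i hiN)
    have : f i * (cc N a i * (1 / F i) - dl F i * Q N a i i
          + ∑ u ∈ Ico (i + 1) (N - 1), ee F u * Q N a u i)
        ≤ f i * (cc N a i * (1 / F i) - dl F i * Q N a i i
          + ∑ u ∈ Ico (i + 1) (N - 1), ee F u * Q N a u u) :=
      mul_le_mul_of_nonneg_left (by linarith) hf
    calc f i * (cc N a i * (1 / F i) - dl F i * Q N a i i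
          + ∑ u ∈ Ico (i + 1) (N - 1), ee F u * Q N a u i)
        ≤ f i * (cc N a i * (1 / F i) - dl F i * Q N a i i
          + ∑ u ∈ Ico (i + 1) (N - 1), ee F u * Q N a u u) := this
      _ = hh f F i * cc N a i
          + (- (dl F i * Q N a i i) + ∑ u ∈ Ico (i + 1) (N - 1), ee F u * Q N a u u) * f i := by
          rw [hh]; ring
  -- step 4 : split and use sumD
  have step4 : ∑ i ∈ range N, (hh f F i * cc N a i
        + (- (dl F i * Q N a i i) + ∑ u ∈ Ico (i + 1) (N - 1), ee F u * Q N a u u) * f i)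
      = ∑ i ∈ range N, hh f F i * cc N a i
        + (- (hh f F 1 * Q N a 0 0)
            + ∑ u ∈ Ico 1 (N - 1), (hh f F u - hh f F (u + 1)) * Q N a u u) := by
    rw [Finset.sum_add_distrib]
    congr 1
    rw [← sumD hfpos hF hN]
    apply Finset.sum_congr rfl
    intro i _
    ring
  -- step 5 : the downward induction
  have step5 := claim hfpos hF ha0 hatri hQIC (N - 2) 0 (by omega)
  have hsplit : ∑ i ∈ range N, hh f F i * cc N a i
      = hh f F 0 * cc N a 0 + ∑ i ∈ Ico (0 + 1) N, hh f F i * cc N a i := by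
    rw [Finset.range_eq_Ico, Finset.sum_eq_sum_Ico_succ_bot (show 0 < N by omega)]
  have hh0 : hh f F 0 = 1 := by
    have hF0 : F 0 = f 0 := by rw [hF]; simp
    rw [hh, hF0]
    exact div_self (ne_of_gt (hfpos 0 (by omega)))
  have hcc0 : cc N a 0 ≤ 1 := hfe 0 (by omega)
  have hfinal : hh f F 0 * cc N a 0 ≤ 1 := by rw [hh0, one_mul]; exact hcc0
  rw [step4] at step3
  rw [hsplit] at step3
  simp only [zero_add] at step3 step5 ⊢
  linarith

end
end Stmt15Aux

/-- Reduction to a consumer-choice problem: if `1/F` is convex and `s*`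
maximizes `V` over the budget set `{s ≥ 0 : s_k ≤ g(k), ∑_k s_k/F(k) ≤ D}`,
then no feasible direct mechanism `a` achieves a higher value of `V` applied
to its vector of allocated position masses `s_k(a) = D·∑_{i≤k} a(k,i)·f(i)`. -/
theorem stmt_15 (N : ℕ) (hN : 2 ≤ N) (f F g : ℕ → ℝ) (D : ℝ) (hD : 0 < D)
    (hfpos : ∀ i, i < N → 0 < f i)
    (hF : ∀ k, F k = ∑ j ∈ Finset.range (k + 1), f j)
    (hconv : ∀ i, 0 < i → i + 1 < N → 2 / F i ≤ 1 / F (i - 1) + 1 / F (i + 1))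
    (V : (ℕ → ℝ) → ℝ) (sstar : ℕ → ℝ)
    (hfeas : (∀ k, k < N → 0 ≤ sstar k ∧ sstar k ≤ g k) ∧
      ∑ k ∈ Finset.range N, sstar k / F k ≤ D)
    (hopt : ∀ s : ℕ → ℝ, (∀ k, k < N → 0 ≤ s k ∧ s k ≤ g k) →
      ∑ k ∈ Finset.range N, s k / F k ≤ D → V s ≤ V sstar) :
    ∀ a : ℕ → ℕ → ℝ,
      (∀ k i, 0 ≤ a k i) →
      (∀ k i, k < i → a k i = 0) →
      (∀ i, i < N → ∀ j, j < N →
        ∑ k ∈ Finset.Ico i N,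
            ((k : ℝ) / ((N : ℝ) - 1) - (i : ℝ) / ((N : ℝ) - 1)) * a k j
          ≤ ∑ k ∈ Finset.Ico i N,
            ((k : ℝ) / ((N : ℝ) - 1) - (i : ℝ) / ((N : ℝ) - 1)) * a k i) →
      (∀ i, i < N → ∑ k ∈ Finset.range N, a k i ≤ 1) →
      (∀ k, k < N → D * ∑ i ∈ Finset.range (k + 1), a k i * f i ≤ g k) →
      V (fun k => if k < N then D * ∑ i ∈ Finset.range (k + 1), a k i * f i else 0)
        ≤ V sstar := by
  intro a ha0 hatri hIC hfe hcap
  have hc : (0:ℝ) < (N:ℝ) - 1 := by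
    have : (2:ℝ) ≤ N := by exact_mod_cast hN
    linarith
  have hcne : ((N:ℝ) - 1) ≠ 0 := ne_of_gt hc
  have hQIC : ∀ i j, i < N → j < N → Stmt15Aux.Q N a i j ≤ Stmt15Aux.Q N a i i := by
    intro i j hi hj
    have h := hIC i hi j hj
    rw [Stmt15Aux.Q, Stmt15Aux.Q]
    calc ∑ k ∈ Finset.Ico i N, ((k:ℝ) - (i:ℝ)) * a k j
        = ((N:ℝ) - 1) * ∑ k ∈ Finset.Ico i N,
            ((k : ℝ) / ((N : ℝ) - 1) - (i : ℝ) / ((N : ℝ) - 1)) * a k j := by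
          rw [Finset.mul_sum]
          apply Finset.sum_congr rfl
          intro k _
          field_simp
      _ ≤ ((N:ℝ) - 1) * ∑ k ∈ Finset.Ico i N,
            ((k : ℝ) / ((N : ℝ) - 1) - (i : ℝ) / ((N : ℝ) - 1)) * a k i :=
          mul_le_mul_of_nonneg_left h (le_of_lt hc)
      _ = ∑ k ∈ Finset.Ico i N, ((k:ℝ) - (i:ℝ)) * a k i := by
          rw [Finset.mul_sum]
          apply Finset.sum_congr rfl
          intro k _
          field_simp
  have hfe' : ∀ i, i < N → Stmt15Aux.cc N a i ≤ 1 := by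
    intro i hi
    rw [Stmt15Aux.cc]
    exact hfe i hi
  apply hopt
  · intro k hk
    constructor
    · simp only [if_pos hk]
      apply mul_nonneg (le_of_lt hD)
      apply Finset.sum_nonneg
      intro i hi
      have : i < N := by
        have := Finset.mem_range.1 hi
        omega
      exact mul_nonneg (ha0 k i) (le_of_lt (hfpos i this))
    · simp only [if_pos hk]
      exact hcap k hk
  · have hb := Stmt15Aux.budget hN hfpos hF hconv ha0 hatri hQIC hfe'
    calc ∑ k ∈ Finset.range N,
          (if k < N then D * ∑ i ∈ Finset.range (k + 1), a k i * f i else 0) / F k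
        = ∑ k ∈ Finset.range N, D * ((∑ i ∈ Finset.range (k + 1), a k i * f i) / F k) := by
          apply Finset.sum_congr rfl
          intro k hk
          rw [if_pos (Finset.mem_range.1 hk), mul_div_assoc]
      _ = D * ∑ k ∈ Finset.range N, (∑ i ∈ Finset.range (k + 1), a k i * f i) / F k := by
          rw [Finset.mul_sum]
      _ ≤ D * 1 := mul_le_mul_of_nonneg_left hb (le_of_lt hD)
      _ = D := mul_one D
end

section
/- Suppose 1/F is convex. Define q_k = g(k)/(D·F(k)) and Q_k = min{1, ∑_{k'=k+1}^{N-1} q_{k'}}. The common lottery c(k) = min{q_k, 1 - Q_k} maximizes total fill ∑_k s_k over the budget set {s ∈ ℝ≥0^N : s_k ≤ g(k), ∑_k s_k/F(k) ≤ D}: i.e., setting s_k = D·F(k)·c(k), the vector s is feasible and achieves the maximum of ∑_k s_k. -/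
/-- Optimal common lottery for the fill objective: with
`q_k = g(k)/(D·F(k))`, `Q_k = min{1, ∑_{k'>k} q_{k'}}` and
`c(k) = min{q_k, 1 - Q_k}`, the vector `s_k = D·F(k)·c(k)` is feasible for the
budget set and maximizes total fill `∑_k s_k` over it. -/
theorem stmt_16 (N : ℕ) (hN : 1 ≤ N) (F g : ℕ → ℝ) (D : ℝ) (hD : 0 < D)
    (hpos : ∀ k, k < N → 0 < F k)
    (hmono : ∀ k, k + 1 < N → F k ≤ F (k + 1))
    (hconv : ∀ i, 0 < i → i + 1 < N → 2 / F i ≤ 1 / F (i - 1) + 1 / F (i + 1))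
    (hg : ∀ k, k < N → 0 ≤ g k)
    (q Q c s : ℕ → ℝ)
    (hq : ∀ k, q k = g k / (D * F k))
    (hQ : ∀ k, Q k = min 1 (∑ k' ∈ Finset.Ico (k + 1) N, q k'))
    (hc : ∀ k, c k = min (q k) (1 - Q k))
    (hs : ∀ k, s k = D * F k * c k) :
    ((∀ k, k < N → 0 ≤ s k ∧ s k ≤ g k) ∧
      ∑ k ∈ Finset.range N, s k / F k ≤ D) ∧
    (∀ s' : ℕ → ℝ, (∀ k, k < N → 0 ≤ s' k ∧ s' k ≤ g k) →
      ∑ k ∈ Finset.range N, s' k / F k ≤ D →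
      ∑ k ∈ Finset.range N, s' k ≤ ∑ k ∈ Finset.range N, s k) := by
  have hq0 : ∀ k, k < N → 0 ≤ q k := by
    intro k hk
    rw [hq]
    exact div_nonneg (hg k hk) (le_of_lt (mul_pos hD (hpos k hk)))
  have hT0 : ∀ k, 0 ≤ ∑ j ∈ Finset.Ico k N, q j := by
    intro k
    apply Finset.sum_nonneg
    intro j hj
    exact hq0 j (Finset.mem_Ico.mp hj).2
  have hQ1 : ∀ k, Q k ≤ 1 := by intro k; rw [hQ]; exact min_le_left _ _
  have hc0 : ∀ k, k < N → 0 ≤ c k := by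
    intro k hk
    rw [hc]
    exact le_min (hq0 k hk) (by linarith [hQ1 k])
  have hcq : ∀ k, c k ≤ q k := by intro k; rw [hc]; exact min_le_left _ _
  -- closed form for tail sums of c
  have key : ∀ m k, k + m = N →
      ∑ j ∈ Finset.Ico k N, c j = min 1 (∑ j ∈ Finset.Ico k N, q j) := by
    intro m
    induction m with
    | zero =>
      intro k hk
      have h : Finset.Ico k N = ∅ := by rw [Finset.Ico_eq_empty_iff]; omega
      simp [h]
    | succ m ih =>
      intro k hk
      have hkN : k < N := by omega
      rw [Finset.sum_eq_sum_Ico_succ_bot hkN, Finset.sum_eq_sum_Ico_succ_bot hkN,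
        ih (k + 1) (by omega), hc k, hQ k]
      have hT0' : 0 ≤ ∑ j ∈ Finset.Ico (k + 1) N, q j := hT0 (k + 1)
      have hqk : 0 ≤ q k := hq0 k hkN
      simp only [min_def]
      split_ifs <;> linarith
  have Ceq : ∀ k, ∑ j ∈ Finset.Ico k N, c j = min 1 (∑ j ∈ Finset.Ico k N, q j) := by
    intro k
    rcases le_or_gt k N with h | h
    · exact key (N - k) k (by omega)
    · have h' : Finset.Ico k N = ∅ := by rw [Finset.Ico_eq_empty_iff]; omega
      simp [h']
  have hfeas1 : ∀ k, k < N → 0 ≤ s k ∧ s k ≤ g k := by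
    intro k hk
    constructor
    · rw [hs]; exact mul_nonneg (mul_nonneg hD.le (hpos k hk).le) (hc0 k hk)
    · rw [hs]
      have h1 : D * F k * c k ≤ D * F k * q k :=
        mul_le_mul_of_nonneg_left (hcq k) (mul_nonneg hD.le (hpos k hk).le)
      have h2 : D * F k * q k = g k := by
        rw [hq, mul_comm, div_mul_cancel₀ _ (ne_of_gt (mul_pos hD (hpos k hk)))]
      linarith
  have hsum_c : ∑ j ∈ Finset.range N, c j ≤ 1 := by
    rw [Finset.range_eq_Ico, Ceq 0]; exact min_le_left _ _
  have hdivc : ∀ k ∈ Finset.range N, s k / F k = D * c k := by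
    intro k hk
    have hF : F k ≠ 0 := ne_of_gt (hpos k (Finset.mem_range.mp hk))
    rw [hs]
    field_simp
  have hfeas2 : ∑ k ∈ Finset.range N, s k / F k ≤ D := by
    rw [Finset.sum_congr rfl hdivc, ← Finset.mul_sum]
    nlinarith [hsum_c]
  refine ⟨⟨hfeas1, hfeas2⟩, ?_⟩
  intro s' hfe' hb'
  set c' : ℕ → ℝ := fun k => s' k / (D * F k) with hc'def
  have hs'eq : ∀ k, k < N → s' k = D * F k * c' k := by
    intro k hk
    have hF : F k ≠ 0 := ne_of_gt (hpos k hk)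
    simp only [hc'def]
    field_simp
  have hc'0 : ∀ k, k < N → 0 ≤ c' k := by
    intro k hk
    exact div_nonneg (hfe' k hk).1 (le_of_lt (mul_pos hD (hpos k hk)))
  have hc'q : ∀ k, k < N → c' k ≤ q k := by
    intro k hk
    rw [hq]
    have hden : 0 < D * F k := mul_pos hD (hpos k hk)
    exact div_le_div_of_nonneg_right (hfe' k hk).2 hden.le |>.trans_eq rfl
  have hdivc' : ∀ k ∈ Finset.range N, s' k / F k = D * c' k := by
    intro k hk
    have hkN := Finset.mem_range.mp hk
    have hF : F k ≠ 0 := ne_of_gt (hpos k hkN)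
    simp only [hc'def]
    field_simp
  have hsum_c' : ∑ j ∈ Finset.range N, c' j ≤ 1 := by
    rw [Finset.sum_congr rfl hdivc', ← Finset.mul_sum] at hb'
    nlinarith [hb']
  have hCC : ∀ k, ∑ j ∈ Finset.Ico k N, c' j ≤ ∑ j ∈ Finset.Ico k N, c j := by
    intro k
    rw [Ceq k]
    apply le_min
    · calc ∑ j ∈ Finset.Ico k N, c' j ≤ ∑ j ∈ Finset.range N, c' j := by
            rw [Finset.range_eq_Ico]
            apply Finset.sum_le_sum_of_subset_of_nonneg
              (Finset.Ico_subset_Ico (Nat.zero_le k) le_rfl)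
            intro i hi _
            exact hc'0 i (Finset.mem_Ico.mp hi).2
        _ ≤ 1 := hsum_c'
    · exact Finset.sum_le_sum fun j hj => hc'q j (Finset.mem_Ico.mp hj).2
  have main : ∀ m k, k + m = N →
      ∑ j ∈ Finset.Ico k N, F j * c' j ≤ (∑ j ∈ Finset.Ico k N, F j * c j)
        + F k * ((∑ j ∈ Finset.Ico k N, c' j) - (∑ j ∈ Finset.Ico k N, c j)) := by
    intro m
    induction m with
    | zero =>
      intro k hk
      have h : Finset.Ico k N = ∅ := by rw [Finset.Ico_eq_empty_iff]; omega
      simp [h]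
    | succ m ih =>
      intro k hk
      have hkN : k < N := by omega
      have ihk := ih (k + 1) (by omega)
      have hΔ : (∑ j ∈ Finset.Ico (k + 1) N, c' j) - (∑ j ∈ Finset.Ico (k + 1) N, c j) ≤ 0 := by
        linarith [hCC (k + 1)]
      rw [Finset.sum_eq_sum_Ico_succ_bot hkN (f := fun j => F j * c' j),
          Finset.sum_eq_sum_Ico_succ_bot hkN (f := fun j => F j * c j),
          Finset.sum_eq_sum_Ico_succ_bot hkN (f := fun j => c' j),
          Finset.sum_eq_sum_Ico_succ_bot hkN (f := fun j => c j)]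
      rcases Nat.lt_or_ge (k + 1) N with h | h
      · have hm := hmono k h
        nlinarith [ihk, mul_nonneg (sub_nonneg.2 hm) (neg_nonneg.2 hΔ)]
      · have he : Finset.Ico (k + 1) N = ∅ := by rw [Finset.Ico_eq_empty_iff]; omega
        simp only [he, Finset.sum_empty] at ihk ⊢
        nlinarith [ihk]
  have hF0 : 0 < F 0 := hpos 0 hN
  have hmain0 := main N 0 (by omega)
  have hC0 := hCC 0
  have hfc : ∑ j ∈ Finset.Ico 0 N, F j * c' j ≤ ∑ j ∈ Finset.Ico 0 N, F j * c j := by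
    nlinarith [hmain0, mul_nonpos_of_nonneg_of_nonpos hF0.le (sub_nonpos.2 hC0)]
  calc ∑ k ∈ Finset.range N, s' k = D * ∑ j ∈ Finset.range N, F j * c' j := by
        rw [Finset.mul_sum]
        apply Finset.sum_congr rfl
        intro k hk
        rw [hs'eq k (Finset.mem_range.mp hk)]; ring
    _ ≤ D * ∑ j ∈ Finset.range N, F j * c j := by
        apply mul_le_mul_of_nonneg_left _ hD.le
        rw [Finset.range_eq_Ico]
        exact hfc
    _ = ∑ k ∈ Finset.range N, s k := by
        rw [Finset.mul_sum]
        apply Finset.sum_congr rfl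
        intro k hk
        rw [hs]; ring
end
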